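/- Fairness excludes starvation in the motivating four-reaction system: Let the species be A, B, C, D and let P consist of the four reactions R1 = ({A},{B},{D}), R2 = ({B},{A},{D}), R3 = ({A},{C},{D}), R4 = ({C},{A},{D}) (each written (reactants, products, catalysts)). With initial state {A, D}: (i) every maximal path of LTS(P) from {A, D} is infinite; (ii) there exists an infinite maximal path from {A, D} in which no step is labelled R3; (iii) every fair maximal path from {A, D} has infinitely many steps labelled R1 and infinitely many steps labelled R3. -/
import Mathlib


open scoped Classical

/-- A reaction: a triple of finite sets of species (reactants, products, catalysts). -/
structure Reaction (S : Type*) where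
  re : Finset S
  pro : Finset S
  cat : Finset S

namespace Reaction
/-- The species involved in a reaction. -/
def speciesSet {S : Type*} (R : Reaction S) : Set S := ↑R.re ∪ ↑R.pro ∪ ↑R.cat
end Reaction

variable {S I : Type*}

/-- A reaction is enabled at a state. -/
def enabled (R : Reaction S) (s : Set S) : Prop :=
  ↑R.re ⊆ s ∧ ¬ (↑R.pro : Set S) ⊆ s ∧ ↑R.cat ⊆ s

/-- The transition relation of the LTS: rule (cat) and rule (no-cat). -/
def Step (R : Reaction S) (s s' : Set S) : Prop :=
  (↑R.re ⊆ s ∧ ¬ (↑R.pro : Set S) ⊆ s ∧ R.cat ≠ ∅ ∧ ↑R.cat ⊆ s ∧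
      s' = (s \ ↑R.re) ∪ ↑R.pro) ∨
  (↑R.re ⊆ s ∧ ¬ (↑R.pro : Set S) ⊆ s ∧ R.cat = ∅ ∧ s' = s ∪ ↑R.pro)

/-- The species of a pathway. -/
def pathwaySpecies (P : Finset (Reaction S)) : Set S := ⋃ R ∈ P, R.speciesSet

/-- The set of components of a reaction: the image of its species under `comp`. -/
def compSet (comp : S → I) (R : Reaction S) : Set I := comp '' R.speciesSet

/-- species(J): all species of reactions having some component in J. -/
def speciesJ (P : Finset (Reaction S)) (comp : S → I) (J : Set I) : Set S :=
  {s | ∃ R ∈ P, (compSet comp R ∩ J).Nonempty ∧ s ∈ R.speciesSet}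

/-- Projection of a set of species onto J. -/
def projSet (P : Finset (Reaction S)) (comp : S → I) (J : Set I) (u : Set S) : Set S :=
  u ∩ speciesJ P comp J

/-- Projection of a finite set of species onto J. -/
noncomputable def projFin (P : Finset (Reaction S)) (comp : S → I) (J : Set I)
    (u : Finset S) : Finset S :=
  u.filter (· ∈ speciesJ P comp J)

/-- PR: the reactions of P all of whose components are in J. -/
def PR (P : Finset (Reaction S)) (comp : S → I) (J : Set I) : Set (Reaction S) :=
  {R | R ∈ P ∧ compSet comp R ⊆ J}

/-- The projected version of a reaction. -/
noncomputable def projReaction (P : Finset (Reaction S)) (comp : S → I) (J : Set I)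
    (R : Reaction S) : Reaction S :=
  ⟨projFin P comp J R.re, projFin P comp J R.pro, projFin P comp J R.cat⟩

/-- The self-loop version of a projected reaction. -/
noncomputable def loopReaction (P : Finset (Reaction S)) (comp : S → I) (J : Set I)
    (R : Reaction S) : Reaction S :=
  ⟨projFin P comp J R.re, projFin P comp J R.re, projFin P comp J R.cat⟩

/-- AR: the abstract reactions coming from reactions crossing the boundary of J. -/
def AR (P : Finset (Reaction S)) (comp : S → I) (J : Set I) : Set (Reaction S) :=
  {R' | ∃ R ∈ P, (compSet comp R ∩ J).Nonempty ∧ (compSet comp R ∩ Jᶜ).Nonempty ∧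
        (R' = projReaction P comp J R ∨ R' = loopReaction P comp J R)}

/-- A finite or infinite alternating sequence of states and (optional) reaction labels.
`len` is the number of steps (`⊤` for infinite); states live at positions `≤ len`,
labels at positions `< len`.  A label `none` denotes a stuttering step `*`. -/
structure RPath (S : Type*) where
  len : ℕ∞
  state : ℕ → Set S
  label : ℕ → Option (Reaction S)

/-- π is a path of the LTS of the set of reactions Q. -/
def IsPath (Q : Set (Reaction S)) (π : RPath S) : Prop :=
  ∀ i : ℕ, (i : ℕ∞) < π.len →
    ∃ R, π.label i = some R ∧ R ∈ Q ∧ Step R (π.state i) (π.state (i + 1))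

/-- π is a maximal path of the LTS of Q. -/
def IsMaximal (Q : Set (Reaction S)) (π : RPath S) : Prop :=
  IsPath Q π ∧
    (π.len = ⊤ ∨ ∃ n : ℕ, π.len = (n : ℕ∞) ∧ ∀ R ∈ Q, ¬ enabled R (π.state n))

/-- Fairness with respect to the reactions in Q: every reaction of Q enabled at
infinitely many positions occurs at infinitely many steps. -/
def FairFor (Q : Set (Reaction S)) (π : RPath S) : Prop :=
  ∀ R ∈ Q, {i : ℕ | (i : ℕ∞) ≤ π.len ∧ enabled R (π.state i)}.Infinite →
    {i : ℕ | (i : ℕ∞) < π.len ∧ π.label i = some R}.Infinite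
/-- Step i of π is kept by the projection onto J. -/
def keptStep (comp : S → I) (J : Set I) (π : RPath S) (i : ℕ) : Prop :=
  (i : ℕ∞) < π.len ∧ ∃ R, π.label i = some R ∧ (compSet comp R ∩ J).Nonempty

/-- The projection π↾J of a path: steps labelled by reactions with no component in J
are deleted and the remaining states are projected onto J. -/
noncomputable def projPath (P : Finset (Reaction S)) (comp : S → I) (J : Set I)
    (π : RPath S) : RPath S :=
  if {i | keptStep comp J π i}.Infinite then
    ⟨⊤, fun n => projSet P comp J (π.state (Nat.nth (keptStep comp J π) n)),
        fun n => π.label (Nat.nth (keptStep comp J π) n)⟩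
  else
    let m := {i | keptStep comp J π i}.ncard
    let endIdx : ℕ :=
      if π.len = ⊤ then (if m = 0 then 0 else Nat.nth (keptStep comp J π) (m - 1) + 1)
      else π.len.toNat
    ⟨(m : ℕ∞),
     fun n => projSet P comp J
       (π.state (if n < m then Nat.nth (keptStep comp J π) n else endIdx)),
     fun n => if n < m then π.label (Nat.nth (keptStep comp J π) n) else none⟩

/-- π↾∞J: if π↾J is finite, extend it with infinitely many stuttering steps
(labelled by the non-reaction symbol `*`, represented by `none`). -/
noncomputable def infExtend (π : RPath S) : RPath S :=
  if π.len = ⊤ then π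
  else ⟨⊤, fun n => π.state (min n π.len.toNat),
          fun n => if (n : ℕ∞) < π.len then π.label n else none⟩

/-- A finite or infinite sequence belongs to the LTS of Q iff every step labelled by a
reaction is a transition of that LTS, every stuttering step repeats the current state,
and the sequence is infinite or ends in a state at which no reaction of Q is enabled. -/
def BelongsTo (Q : Set (Reaction S)) (π : RPath S) : Prop :=
  (∀ i : ℕ, (i : ℕ∞) < π.len →
      (∀ R, π.label i = some R → R ∈ Q ∧ Step R (π.state i) (π.state (i + 1))) ∧
      (π.label i = none → π.state (i + 1) = π.state i)) ∧
  (π.len = ⊤ ∨ ∃ n : ℕ, π.len = (n : ℕ∞) ∧ ∀ R ∈ Q, ¬ enabled R (π.state n))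

/-- ACTL⁻ formulas. -/
inductive ACTL (S : Type*) where
  | tt : ACTL S
  | ff : ACTL S
  | atom (s : S) : ACTL S
  | natom (s : S) : ACTL S
  | and (f g : ACTL S) : ACTL S
  | or (f g : ACTL S) : ACTL S
  | au (f g : ACTL S) : ACTL S
  | auw (f g : ACTL S) : ACTL S

/-- The atomic propositions occurring in an ACTL⁻ formula. -/
def atoms {S : Type*} : ACTL S → Set S
  | .tt => ∅
  | .ff => ∅
  | .atom s => {s}
  | .natom s => {s}
  | .and f g => atoms f ∪ atoms g
  | .or f g => atoms f ∪ atoms g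
  | .au f g => atoms f ∪ atoms g
  | .auw f g => atoms f ∪ atoms g

/-- Satisfaction of an ACTL⁻ formula at a state, relative to a set `D` of designated
maximal paths: path quantifiers range over the paths of `D` starting at the state. -/
def Sat {S : Type*} (D : Set (RPath S)) : ACTL S → Set S → Prop
  | .tt, _ => True
  | .ff, _ => False
  | .atom a, t => a ∈ t
  | .natom a, t => a ∉ t
  | .and f g, t => Sat D f t ∧ Sat D g t
  | .or f g, t => Sat D f t ∨ Sat D g t
  | .au f g, t => ∀ π ∈ D, π.state 0 = t →
      ∃ m : ℕ, (m : ℕ∞) ≤ π.len ∧ Sat D g (π.state m) ∧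
        ∀ m' < m, Sat D f (π.state m')
  | .auw f g, t => ∀ π ∈ D, π.state 0 = t →
      ∀ m : ℕ, (m : ℕ∞) ≤ π.len →
        (∀ m' < m, ¬ Sat D g (π.state m')) → Sat D f (π.state m)

/-- The suffix of a path starting at its k-th state. -/
def suffixPath (π : RPath S) (k : ℕ) : RPath S :=
  ⟨π.len - (k : ℕ∞), fun n => π.state (k + n), fun n => π.label (k + n)⟩

/-- The four species of the motivating example. -/
inductive Sp : Type
  | A | B | C | D
deriving DecidableEq

/-- R1 = ({A},{B},{D}) -/
def R1 : Reaction Sp := ⟨{Sp.A}, {Sp.B}, {Sp.D}⟩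
/-- R2 = ({B},{A},{D}) -/
def R2 : Reaction Sp := ⟨{Sp.B}, {Sp.A}, {Sp.D}⟩
/-- R3 = ({A},{C},{D}) -/
def R3 : Reaction Sp := ⟨{Sp.A}, {Sp.C}, {Sp.D}⟩
/-- R4 = ({C},{A},{D}) -/
def R4 : Reaction Sp := ⟨{Sp.C}, {Sp.A}, {Sp.D}⟩

/-- The pathway of the motivating four-reaction example. -/
noncomputable def P4 : Finset (Reaction Sp) := {R1, R2, R3, R4}

/-- The initial state {A, D}. -/
def init4 : Set Sp := {Sp.A, Sp.D}

section AuxFour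

/-- The state {A,D}. -/
def sAD : Set Sp := {Sp.A, Sp.D}
/-- The state {B,D}. -/
def sBD : Set Sp := {Sp.B, Sp.D}
/-- The state {C,D}. -/
def sCD : Set Sp := {Sp.C, Sp.D}

lemma init4_eq_sAD : init4 = sAD := rfl

lemma mem_P4 (R : Reaction Sp) :
    R ∈ (↑P4 : Set (Reaction Sp)) ↔ R = R1 ∨ R = R2 ∨ R = R3 ∨ R = R4 := by
  simp [P4]

lemma R1_mem : R1 ∈ (↑P4 : Set (Reaction Sp)) := (mem_P4 R1).mpr (Or.inl rfl)
lemma R2_mem : R2 ∈ (↑P4 : Set (Reaction Sp)) := (mem_P4 R2).mpr (Or.inr (Or.inl rfl))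
lemma R3_mem : R3 ∈ (↑P4 : Set (Reaction Sp)) :=
  (mem_P4 R3).mpr (Or.inr (Or.inr (Or.inl rfl)))
lemma R4_mem : R4 ∈ (↑P4 : Set (Reaction Sp)) :=
  (mem_P4 R4).mpr (Or.inr (Or.inr (Or.inr rfl)))

lemma R1_ne_R3 : R1 ≠ R3 := by
  intro h
  have h' := congrArg Reaction.pro h
  simp only [R1, R3] at h'
  have : Sp.B = Sp.C := Finset.singleton_injective h'
  exact Sp.noConfusion this

lemma R2_ne_R3 : R2 ≠ R3 := by
  intro h
  have h' := congrArg Reaction.re h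
  simp only [R2, R3] at h'
  have : Sp.B = Sp.A := Finset.singleton_injective h'
  exact Sp.noConfusion this

lemma enabled_R1_AD : enabled R1 sAD := by
  refine ⟨?_, ?_, ?_⟩ <;> simp [R1, sAD, Set.subset_def]

lemma enabled_R3_AD : enabled R3 sAD := by
  refine ⟨?_, ?_, ?_⟩ <;> simp [R3, sAD, Set.subset_def]

lemma enabled_R2_BD : enabled R2 sBD := by
  refine ⟨?_, ?_, ?_⟩ <;> simp [R2, sBD, Set.subset_def]

lemma enabled_R4_CD : enabled R4 sCD := by
  refine ⟨?_, ?_, ?_⟩ <;> simp [R4, sCD, Set.subset_def]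

lemma step_R1_AD : Step R1 sAD sBD := by
  left
  refine ⟨?_, ?_, ?_, ?_, ?_⟩
  · simp [R1, sAD, Set.subset_def]
  · simp [R1, sAD, Set.subset_def]
  · simp [R1]
  · simp [R1, sAD, Set.subset_def]
  · ext x; cases x <;> simp [R1, sAD, sBD]

lemma step_R2_BD : Step R2 sBD sAD := by
  left
  refine ⟨?_, ?_, ?_, ?_, ?_⟩
  · simp [R2, sBD, Set.subset_def]
  · simp [R2, sBD, Set.subset_def]
  · simp [R2]
  · simp [R2, sBD, Set.subset_def]
  · ext x; cases x <;> simp [R2, sAD, sBD]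

lemma step_from_AD {R : Reaction Sp} {s' : Set Sp}
    (hR : R ∈ (↑P4 : Set (Reaction Sp))) (h : Step R sAD s') :
    (R = R1 ∧ s' = sBD) ∨ (R = R3 ∧ s' = sCD) := by
  rcases (mem_P4 R).mp hR with rfl | rfl | rfl | rfl
  · left; refine ⟨rfl, ?_⟩
    rcases h with ⟨_, _, _, _, h5⟩ | ⟨_, _, hc, _⟩
    · subst h5; ext x; cases x <;> simp [R1, sAD, sBD]
    · simp [R1] at hc
  · exfalso
    rcases h with ⟨h1, _⟩ | ⟨h1, _⟩ <;>
      · have := h1 (show Sp.B ∈ (↑R2.re : Set Sp) by simp [R2])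
        simp [sAD] at this
  · right; refine ⟨rfl, ?_⟩
    rcases h with ⟨_, _, _, _, h5⟩ | ⟨_, _, hc, _⟩
    · subst h5; ext x; cases x <;> simp [R3, sAD, sCD]
    · simp [R3] at hc
  · exfalso
    rcases h with ⟨h1, _⟩ | ⟨h1, _⟩ <;>
      · have := h1 (show Sp.C ∈ (↑R4.re : Set Sp) by simp [R4])
        simp [sAD] at this

lemma step_from_BD {R : Reaction Sp} {s' : Set Sp}
    (hR : R ∈ (↑P4 : Set (Reaction Sp))) (h : Step R sBD s') :
    R = R2 ∧ s' = sAD := by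
  rcases (mem_P4 R).mp hR with rfl | rfl | rfl | rfl
  · exfalso
    rcases h with ⟨h1, _⟩ | ⟨h1, _⟩ <;>
      · have := h1 (show Sp.A ∈ (↑R1.re : Set Sp) by simp [R1])
        simp [sBD] at this
  · refine ⟨rfl, ?_⟩
    rcases h with ⟨_, _, _, _, h5⟩ | ⟨_, _, hc, _⟩
    · subst h5; ext x; cases x <;> simp [R2, sAD, sBD]
    · simp [R2] at hc
  · exfalso
    rcases h with ⟨h1, _⟩ | ⟨h1, _⟩ <;>
      · have := h1 (show Sp.A ∈ (↑R3.re : Set Sp) by simp [R3])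
        simp [sBD] at this
  · exfalso
    rcases h with ⟨h1, _⟩ | ⟨h1, _⟩ <;>
      · have := h1 (show Sp.C ∈ (↑R4.re : Set Sp) by simp [R4])
        simp [sBD] at this

lemma step_from_CD {R : Reaction Sp} {s' : Set Sp}
    (hR : R ∈ (↑P4 : Set (Reaction Sp))) (h : Step R sCD s') :
    R = R4 ∧ s' = sAD := by
  rcases (mem_P4 R).mp hR with rfl | rfl | rfl | rfl
  · exfalso
    rcases h with ⟨h1, _⟩ | ⟨h1, _⟩ <;>
      · have := h1 (show Sp.A ∈ (↑R1.re : Set Sp) by simp [R1])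
        simp [sCD] at this
  · exfalso
    rcases h with ⟨h1, _⟩ | ⟨h1, _⟩ <;>
      · have := h1 (show Sp.B ∈ (↑R2.re : Set Sp) by simp [R2])
        simp [sCD] at this
  · exfalso
    rcases h with ⟨h1, _⟩ | ⟨h1, _⟩ <;>
      · have := h1 (show Sp.A ∈ (↑R3.re : Set Sp) by simp [R3])
        simp [sCD] at this
  · refine ⟨rfl, ?_⟩
    rcases h with ⟨_, _, _, _, h5⟩ | ⟨_, _, hc, _⟩
    · subst h5; ext x; cases x <;> simp [R4, sAD, sCD]
    · simp [R4] at hc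

/-- Invariant: along any path from `{A,D}`, all states are among the three. -/
lemma good_states {π : RPath Sp} (hp : IsPath (↑P4) π) (h0 : π.state 0 = init4) :
    ∀ i : ℕ, (i : ℕ∞) ≤ π.len →
      π.state i = sAD ∨ π.state i = sBD ∨ π.state i = sCD := by
  intro i
  induction i with
  | zero => intro _; left; rw [h0]; rfl
  | succ n ih =>
    intro hle
    have hn : (n : ℕ∞) < π.len := by
      refine lt_of_lt_of_le ?_ hle
      exact_mod_cast Nat.lt_succ_self n
    obtain ⟨R, _, hRP, hstep⟩ := hp n hn
    rcases ih (le_of_lt hn) with h | h | h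
    · rw [h] at hstep
      rcases step_from_AD hRP hstep with ⟨_, h'⟩ | ⟨_, h'⟩
      · right; left; exact h'
      · right; right; exact h'
    · rw [h] at hstep
      left; exact (step_from_BD hRP hstep).2
    · rw [h] at hstep
      left; exact (step_from_CD hRP hstep).2

end AuxFour

/-- **Fairness excludes starvation in the motivating four-reaction system.**
(i) every maximal path of `LTS(P4)` from `{A, D}` is infinite; (ii) there is an
infinite maximal path from `{A, D}` in which no step is labelled `R3`; (iii) every
fair maximal path from `{A, D}` has infinitely many steps labelled `R1` and
infinitely many steps labelled `R3`. -/
theorem fairness_excludes_starvation :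
    (∀ π : RPath Sp, IsMaximal (↑P4) π → π.state 0 = init4 → π.len = ⊤) ∧
    (∃ π : RPath Sp, IsMaximal (↑P4) π ∧ π.state 0 = init4 ∧ π.len = ⊤ ∧
      ∀ i : ℕ, π.label i ≠ some R3) ∧
    (∀ π : RPath Sp, IsMaximal (↑P4) π → FairFor (↑P4) π → π.state 0 = init4 →
      {i : ℕ | π.label i = some R1}.Infinite ∧
      {i : ℕ | π.label i = some R3}.Infinite) := by
  have main_i : ∀ π : RPath Sp, IsMaximal (↑P4) π → π.state 0 = init4 → π.len = ⊤ := by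
    intro π hmax h0
    rcases hmax.2 with h | ⟨n, hn, hne⟩
    · exact h
    · exfalso
      have hg := good_states hmax.1 h0 n (by rw [hn])
      rcases hg with h | h | h
      · exact hne R1 R1_mem (h ▸ enabled_R1_AD)
      · exact hne R2 R2_mem (h ▸ enabled_R2_BD)
      · exact hne R4 R4_mem (h ▸ enabled_R4_CD)
  refine ⟨main_i, ?_, ?_⟩
  · -- part (ii): alternate R1, R2
    refine ⟨⟨⊤, fun i => if i % 2 = 0 then sAD else sBD,
             fun i => if i % 2 = 0 then some R1 else some R2⟩, ⟨?_, Or.inl rfl⟩, rfl, rfl, ?_⟩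
    · intro i _
      by_cases h : i % 2 = 0
      · refine ⟨R1, by simp [h], R1_mem, ?_⟩
        have h' : (i + 1) % 2 ≠ 0 := by omega
        simpa [h, h'] using step_R1_AD
      · refine ⟨R2, by simp [h], R2_mem, ?_⟩
        have h' : (i + 1) % 2 = 0 := by omega
        simpa [h, h'] using step_R2_BD
    · intro i
      by_cases h : i % 2 = 0 <;> simp only [h]
      · simpa using fun h' => R1_ne_R3 h'
      · simpa [h] using fun h' => R2_ne_R3 h'
  · -- part (iii)
    intro π hmax hfair h0
    have hlen : π.len = ⊤ := main_i π hmax h0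
    have hgood := good_states hmax.1 h0
    have hAD : {i : ℕ | π.state i = sAD}.Infinite := by
      apply Set.infinite_of_forall_exists_gt
      intro a
      by_cases h : π.state (a + 1) = sAD
      · exact ⟨a + 1, h, Nat.lt_succ_self a⟩
      · refine ⟨a + 2, ?_, by omega⟩
        obtain ⟨R, _, hRP, hstep⟩ := hmax.1 (a + 1) (by rw [hlen]; exact ENat.coe_lt_top _)
        rcases hgood (a + 1) (by rw [hlen]; exact le_top) with h' | h' | h'
        · exact absurd h' h
        · rw [h'] at hstep
          exact (step_from_BD hRP hstep).2
        · rw [h'] at hstep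
          exact (step_from_CD hRP hstep).2
    have key : ∀ R : Reaction Sp, R ∈ (↑P4 : Set (Reaction Sp)) → enabled R sAD →
        {i : ℕ | π.label i = some R}.Infinite := by
      intro R hRP hen
      have hinf : {i : ℕ | (i : ℕ∞) ≤ π.len ∧ enabled R (π.state i)}.Infinite := by
        refine hAD.mono ?_
        intro i hi
        exact ⟨by rw [hlen]; exact le_top, by rw [Set.mem_setOf_eq.mp hi]; exact hen⟩
      refine (hfair R hRP hinf).mono ?_
      intro i hi
      exact hi.2
    exact ⟨key R1 R1_mem enabled_R1_AD, key R3 R3_mem enabled_R3_AD⟩
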